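/- Let n ≥ 1, β₁, β₂ ∈ ℝ, and let γ : ℝⁿ → ℝⁿ be the rank vector defined by γ_j(s) = n⁻¹ Σ_{i=1}^n p_ij(s), where p_ij(s) = exp(u_ij(s)) / Σ_{k=1}^n exp(u_ik(s)) and u_ij(s) = β₁ s_j + β₂ (s_i − s_j)². Then γ is differentiable, and at every egalitarian point s = θ𝟙 (θ ∈ ℝ) its Jacobian matrix equals (β₁/n)(I − n⁻¹E). In particular, the Jacobian of γ at egalitarian points does not depend on β₂ or on θ. -/

import Mathlib

/-- **Jacobian of the rank vector at egalitarian points.** For `n ≥ 1` and the rank vector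
`γ_j(s) = n⁻¹ ∑_i p_ij(s)` induced by utilities `u_ij(s) = β₁ s_j + β₂ (s_i − s_j)²`,
`γ` is differentiable, and at every egalitarian point `s = θ𝟙` its Jacobian matrix equals
`(β₁/n)(I − n⁻¹E)`, i.e. has entries `(β₁/n)(δ_{jl} − 1/n)`; in particular it does not
depend on `β₂` or `θ`. -/
theorem rank_jacobian_egalitarian (n : ℕ) (hn : 1 ≤ n) (β₁ β₂ : ℝ)
    (u : (Fin n → ℝ) → Fin n → Fin n → ℝ)
    (hu : ∀ s i j, u s i j = β₁ * s j + β₂ * (s i - s j) ^ 2)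
    (p : (Fin n → ℝ) → Fin n → Fin n → ℝ)
    (hp : ∀ s i j, p s i j = Real.exp (u s i j) / ∑ k, Real.exp (u s i k))
    (γ : (Fin n → ℝ) → Fin n → ℝ)
    (hγ : ∀ s j, γ s j = (n : ℝ)⁻¹ * ∑ i, p s i j) :
    Differentiable ℝ γ ∧
      ∀ θ : ℝ, ∀ j l : Fin n,
        fderiv ℝ γ (fun _ => θ) (Pi.single l 1) j =
          (β₁ / n) * ((if j = l then (1 : ℝ) else 0) - (n : ℝ)⁻¹) := by
  haveI : Nonempty (Fin n) := Fin.pos_iff_nonempty.mp hn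
  have hn0 : (n : ℝ) ≠ 0 := Nat.cast_ne_zero.mpr (by omega)
  -- γ as an explicit function
  have hγfun : ∀ j : Fin n, (fun s => γ s j) =
      fun s : Fin n → ℝ => (n : ℝ)⁻¹ * ∑ i,
        Real.exp (β₁ * s j + β₂ * (s i - s j) ^ 2) *
          (∑ k, Real.exp (β₁ * s k + β₂ * (s i - s k) ^ 2))⁻¹ := by
    intro j; funext s
    simp only [hγ, hp, hu, div_eq_mul_inv]
  -- denominator positivity
  have hDpos : ∀ (s : Fin n → ℝ) (i : Fin n),
      0 < ∑ k, Real.exp (β₁ * s k + β₂ * (s i - s k) ^ 2) :=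
    fun s i => Finset.sum_pos (fun k _ => Real.exp_pos _) Finset.univ_nonempty
  -- differentiability of the exponential pieces
  have hproj : ∀ k : Fin n, Differentiable ℝ (fun s : Fin n → ℝ => s k) :=
    fun k => (ContinuousLinearMap.proj k : (Fin n → ℝ) →L[ℝ] ℝ).differentiable
  have hEdiff : ∀ i j : Fin n, Differentiable ℝ
      (fun s : Fin n → ℝ => Real.exp (β₁ * s j + β₂ * (s i - s j) ^ 2)) := by
    intro i j
    exact Real.differentiable_exp.comp
      (((hproj j).const_mul β₁).add ((((hproj i).sub (hproj j)).pow 2).const_mul β₂))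
  have hdiffγ : Differentiable ℝ γ := by
    rw [show γ = fun s j => γ s j from rfl]
    refine differentiable_pi.mpr fun j => ?_
    rw [hγfun j]
    exact Differentiable.const_mul
      (Differentiable.fun_sum fun i _ =>
        (hEdiff i j).mul ((Differentiable.fun_sum fun k _ => hEdiff i k).inv
          (fun s => (hDpos s i).ne'))) _
  refine ⟨hdiffγ, ?_⟩
  intro θ j l
  set a : Fin n → ℝ := fun _ => θ with ha
  set c : ℝ := Real.exp (β₁ * θ) with hc
  have hcpos : 0 < c := Real.exp_pos _
  set L : Fin n → ((Fin n → ℝ) →L[ℝ] ℝ) :=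
    fun k => ContinuousLinearMap.proj k with hL
  have hprojF : ∀ k : Fin n, HasFDerivAt (fun s : Fin n → ℝ => s k) (L k) a :=
    fun k => (L k).hasFDerivAt
  -- derivative of inner affine+quadratic function at the egalitarian point
  have hUF : ∀ i j : Fin n, HasFDerivAt
      (fun s : Fin n → ℝ => β₁ * s j + β₂ * (s i - s j) ^ 2) (β₁ • L j) a := by
    intro i j
    have hsub := (hprojF i).sub (hprojF j)
    have hsq : HasFDerivAt (fun s : Fin n → ℝ => (s i - s j) ^ 2)
        ((0 : (Fin n → ℝ) →L[ℝ] ℝ)) a := by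
      have h := hsub.mul hsub
      have heq : (fun s : Fin n → ℝ => (s i - s j) ^ 2)
          = fun s => (s i - s j) * (s i - s j) := by funext s; ring
      rw [heq]
      refine h.congr_fderiv ?_
      ext v
      simp [ha]
    have h := ((hprojF j).const_mul β₁).add (hsq.const_mul β₂)
    refine h.congr_fderiv ?_
    ext v
    simp [ha]
  -- derivative of the exponential pieces at the egalitarian point
  have hEF : ∀ i j : Fin n, HasFDerivAt
      (fun s : Fin n → ℝ => Real.exp (β₁ * s j + β₂ * (s i - s j) ^ 2))
      ((c * β₁) • L j) a := by
    intro i j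
    have h := (hUF i j).exp
    refine h.congr_fderiv ?_
    ext v
    simp [ha, hc, mul_assoc]
  -- derivative of the denominator
  have hDF : ∀ i : Fin n, HasFDerivAt
      (fun s : Fin n → ℝ => ∑ k, Real.exp (β₁ * s k + β₂ * (s i - s k) ^ 2))
      (∑ k, (c * β₁) • L k) a :=
    fun i => HasFDerivAt.fun_sum (fun k _ => hEF i k)
  have hDval : ∀ i : Fin n, (∑ k, Real.exp (β₁ * a k + β₂ * (a i - a k) ^ 2))
      = (n : ℝ) * c := by
    intro i
    simp [ha, hc, Finset.sum_const, mul_comm]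
  -- derivative of the inverse of the denominator
  have hIF : ∀ i : Fin n, HasFDerivAt
      (fun s : Fin n → ℝ => (∑ k, Real.exp (β₁ * s k + β₂ * (s i - s k) ^ 2))⁻¹)
      ((-(((n : ℝ) * c) ^ 2)⁻¹) • ∑ k, (c * β₁) • L k) a := by
    intro i
    have hne : (∑ k, Real.exp (β₁ * a k + β₂ * (a i - a k) ^ 2)) ≠ 0 :=
      (hDpos a i).ne'
    have h := (hasDerivAt_inv hne).comp_hasFDerivAt a (hDF i)
    rw [hDval i] at h
    exact h
  -- derivative of each γ_j at the egalitarian point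
  have hΓ : ∀ j : Fin n, HasFDerivAt (fun s => γ s j)
      ((β₁ / n) • (L j - (n : ℝ)⁻¹ • ∑ k, L k)) a := by
    intro j
    rw [hγfun j]
    have h := (HasFDerivAt.fun_sum (u := Finset.univ)
      (fun i (_ : i ∈ Finset.univ) => (hEF i j).mul (hIF i))).const_mul (n : ℝ)⁻¹
    refine h.congr_fderiv ?_
    ext v
    simp only [ContinuousLinearMap.smul_apply, ContinuousLinearMap.sub_apply,
      ContinuousLinearMap.sum_apply, ContinuousLinearMap.add_apply, smul_eq_mul,
      ContinuousLinearMap.coe_sum', Finset.sum_apply, hDval]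
    have hLv : ∀ k : Fin n, (L k) v = v k := fun k => rfl
    simp only [hLv, ha, hc, sub_self]
    norm_num [Finset.sum_const, Finset.card_univ, ← Finset.mul_sum]
    field_simp
    ring
  -- assemble
  have hfd : fderiv ℝ γ a =
      ContinuousLinearMap.pi fun j => fderiv ℝ (fun s => γ s j) a :=
    fderiv_pi (fun j => (hΓ j).differentiableAt)
  rw [hfd, ContinuousLinearMap.pi_apply, (hΓ j).fderiv]
  have hsum1 : (∑ k, (Pi.single l 1 : Fin n → ℝ) k) = 1 := by
    simp [Pi.single_apply]
  simp only [ContinuousLinearMap.smul_apply, ContinuousLinearMap.sub_apply,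
    ContinuousLinearMap.sum_apply, smul_eq_mul]
  have hLv : ∀ k : Fin n, (L k) ((Pi.single l 1 : Fin n → ℝ)) = (Pi.single l 1 : Fin n → ℝ) k := by
    intro k; simp [hL]
  simp only [hLv, hsum1, Pi.single_apply, mul_one]
  simp [Finset.sum_ite_eq']
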